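/- Let G be a graph and let S = {M_1, ..., M_k} be an (m,s)-snake in G: the M_i are disjoint m-element vertex sets, each inducing a clique in G, and the auxiliary graph on {M_1,...,M_k} joining M and M' whenever the bipartite graph G[M, M'] contains a complete bipartite K_{s,s} is connected. Let Q be a subgraph of the hypercube Q_n, and for each vertex x of Q let D_x be a set of at most Δ vertices of ∪_i M_i. If m ≥ v(Q)/k + s + Δ and s ≥ 2Δ + 8k·C(n, ⌊n/2⌋), then there is an embedding φ of Q into the induced subgraph G[∪_i M_i] with φ(x) ∉ D_x for every vertex x of Q. -/

import Mathlib

def cubeGraph (n : ℕ) : SimpleGraph (Fin n → Bool) where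
  Adj x y := (Finset.univ.filter fun i => x i ≠ y i).card = 1
  symm := by
    constructor
    intro x y hxy
    beta_reduce at hxy ⊢
    have h : (Finset.univ.filter fun i => y i ≠ x i)
        = Finset.univ.filter fun i => x i ≠ y i := by
      apply Finset.filter_congr
      intro i _
      simp [ne_comm]
    rw [h]; exact hxy
  loopless := by
    constructor
    intro x hx
    simp at hx
/-- `K_{s,s} ⊆ G[M,M']`. -/
def hasKss {V : Type*} [DecidableEq V] (G : SimpleGraph V) (s : ℕ)
    (M M' : Finset V) : Prop :=
  ∃ X Y : Finset V, X ⊆ M ∧ Y ⊆ M' ∧ X.card = s ∧ Y.card = s ∧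
    ∀ x ∈ X, ∀ y ∈ Y, G.Adj x y

open Finset

lemma greedy_injection {ι V : Type*} [DecidableEq ι] [DecidableEq V]
    (v0 : V) (A : Finset ι) (π : ι → ℕ) (P F : ι → Finset V)
    (hπ : ∀ a ∈ A, ∀ b ∈ A, π a = π b → a = b)
    (hcount : ∀ a ∈ A,
      (A.filter fun b => π b < π a ∧ ¬ Disjoint (P a) (P b)).card + (F a).card < (P a).card) :
    ∃ ψ : ι → V, ∀ a ∈ A, ψ a ∈ P a ∧ ψ a ∉ F a ∧ ∀ b ∈ A, ψ a = ψ b → a = b := by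
  revert hπ hcount
  induction A using Finset.strongInduction with
  | _ A ih =>
  intro hπ hcount
  rcases A.eq_empty_or_nonempty with rfl | hA
  · exact ⟨fun _ => v0, by simp⟩
  obtain ⟨a, haA, hamax⟩ := A.exists_max_image π hA
  set A' := A.erase a with hA'
  have hsub : A' ⊆ A := erase_subset _ _
  have hlt : ∀ b ∈ A', π b < π a := by
    intro b hb
    have hbA := hsub hb
    rcases lt_or_eq_of_le (hamax b hbA) with h | h
    · exact h
    · exact absurd (hπ b hbA a haA h) (ne_of_mem_erase hb)
  obtain ⟨ψ', hψ'⟩ := ih A' (erase_ssubset haA)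
    (fun b hb c hc h => hπ b (hsub hb) c (hsub hc) h)
    (fun b hb => lt_of_le_of_lt
      (Nat.add_le_add_right (card_le_card (filter_subset_filter _ hsub)) _)
      (hcount b (hsub hb)))
  set bad : Finset V := F a ∪ (A'.filter fun b => ¬ Disjoint (P a) (P b)).image ψ' with hbad
  have hbadcard : bad.card < (P a).card := by
    calc bad.card ≤ (F a).card + ((A'.filter fun b => ¬ Disjoint (P a) (P b)).image ψ').card :=
          card_union_le _ _
      _ ≤ (F a).card + (A'.filter fun b => ¬ Disjoint (P a) (P b)).card := by
          gcongr; exact card_image_le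
      _ ≤ (F a).card + (A.filter fun b => π b < π a ∧ ¬ Disjoint (P a) (P b)).card := by
          gcongr
          intro b hb
          rw [mem_filter] at hb ⊢
          exact ⟨hsub hb.1, hlt b hb.1, hb.2⟩
      _ < (P a).card := by rw [Nat.add_comm]; exact hcount a haA
  obtain ⟨v, hv⟩ : (P a \ bad).Nonempty := by
    rw [← card_pos]
    have h1 : (P a).card ≤ (P a \ bad).card + bad.card := by
      refine le_trans (card_le_card fun x hx => ?_) (card_union_le _ _)
      by_cases hxb : x ∈ bad
      · exact mem_union_right _ hxb
      · exact mem_union_left _ (mem_sdiff.2 ⟨hx, hxb⟩)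
    omega
  rw [mem_sdiff] at hv
  obtain ⟨hvP, hvbad⟩ := hv
  refine ⟨Function.update ψ' a v, ?_⟩
  have hne : ∀ b ∈ A', v ≠ ψ' b ∨ Disjoint (P a) (P b) := by
    intro b hb
    by_cases hd : Disjoint (P a) (P b)
    · exact Or.inr hd
    · left
      intro hvb
      exact hvbad (mem_union_right _ (mem_image.2 ⟨b, mem_filter.2 ⟨hb, hd⟩, hvb.symm⟩))
  intro c hcA
  by_cases hca : c = a
  · subst hca
    rw [Function.update_self]
    refine ⟨hvP, fun hF => hvbad (mem_union_left _ hF), ?_⟩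
    intro b hbA hvb
    by_cases hba : b = c
    · exact hba.symm
    · exfalso
      have hb' : b ∈ A' := mem_erase.2 ⟨hba, hbA⟩
      rw [Function.update_of_ne hba] at hvb
      rcases hne b hb' with h | h
      · exact h hvb
      · exact (Finset.disjoint_left.1 h hvP) (by rw [hvb]; exact (hψ' b hb').1)
  · have hc' : c ∈ A' := mem_erase.2 ⟨hca, hcA⟩
    rw [Function.update_of_ne hca]
    obtain ⟨h1, h2, h3⟩ := hψ' c hc'
    refine ⟨h1, h2, ?_⟩
    intro b hbA hcb
    by_cases hba : b = a
    · rw [hba, Function.update_self] at hcb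
      exfalso
      rcases hne c hc' with h | h
      · exact h hcb.symm
      · exact (Finset.disjoint_left.1 h hvP) (by rw [← hcb]; exact h1)
    · rw [Function.update_of_ne hba] at hcb
      exact h3 b (mem_erase.2 ⟨hba, hbA⟩) hcb

open SimpleGraph in
lemma walk_cross {V' : Type*} {H : SimpleGraph V'} (s : Finset V') [DecidableEq V'] :
    ∀ {a b : V'} (_ : H.Walk a b), a ∈ s → b ∉ s → ∃ x ∈ s, ∃ y, y ∉ s ∧ H.Adj x y := by
  intro a b p
  induction p with
  | nil => intro h1 h2; exact absurd h1 h2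
  | @cons u v w hadj p ihp =>
    intro h1 h2
    by_cases hv : v ∈ s
    · exact ihp hv h2
    · exact ⟨u, h1, v, hv, hadj⟩

open SimpleGraph in
lemma exists_covering_walk {V' : Type*} [Fintype V'] [DecidableEq V'] {H : SimpleGraph V'}
    (hc : H.Connected) :
    ∃ (u : V') (w : H.Walk u u), (∀ v, v ∈ w.support) ∧ w.length + 2 ≤ 2 * Fintype.card V' := by
  have hne : Nonempty V' := hc.nonempty
  have key : ∀ c : ℕ, ∃ (u : V') (w : H.Walk u u) (s : Finset V'),
      s.Nonempty ∧ (∀ v ∈ s, v ∈ w.support) ∧ w.length + 2 ≤ 2 * s.card ∧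
      min (c + 1) (Fintype.card V') ≤ s.card := by
    intro c
    induction c with
    | zero =>
      obtain ⟨u⟩ := hne
      refine ⟨u, Walk.nil, {u}, Finset.singleton_nonempty u, ?_, by simp, ?_⟩
      · intro v hv
        rw [Finset.mem_singleton] at hv
        subst hv; simp
      · simp [Nat.one_le_iff_ne_zero, Fintype.card_ne_zero]
    | succ c ihc =>
      obtain ⟨u, w, s, hsne, hcov, hlen, hmin⟩ := ihc
      by_cases huniv : s = Finset.univ
      · refine ⟨u, w, s, hsne, hcov, hlen, ?_⟩
        rw [huniv, Finset.card_univ]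
        exact min_le_right _ _
      · obtain ⟨b0, hb0⟩ : ∃ b0, b0 ∉ s := by
          by_contra h
          push_neg at h
          exact huniv (Finset.eq_univ_iff_forall.2 h)
        obtain ⟨a0, ha0⟩ := hsne
        obtain ⟨x, hx, y, hy, hxy⟩ := walk_cross s ((hc a0 b0).some) ha0 hb0
        have hxsup : x ∈ w.support := hcov x hx
        set mid : H.Walk x x := Walk.cons hxy (Walk.cons hxy.symm Walk.nil) with hmid
        set w' : H.Walk u u := (w.takeUntil x hxsup).append (mid.append (w.dropUntil x hxsup))
          with hw'
        have hlen' : w'.length = w.length + 2 := by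
          have hspec := congrArg Walk.length (w.take_spec hxsup)
          rw [Walk.length_append] at hspec
          rw [hw', Walk.length_append, Walk.length_append]
          simp only [hmid, Walk.length_cons, Walk.length_nil]
          omega
        have hsupp : ∀ v ∈ insert y s, v ∈ w'.support := by
          intro v hv
          rw [Finset.mem_insert] at hv
          rw [hw', Walk.mem_support_append_iff, Walk.mem_support_append_iff]
          rcases hv with rfl | hv
          · right; left
            simp [hmid]
          · have := hcov v hv
            conv at this => rw [← w.take_spec hxsup]
            rw [Walk.mem_support_append_iff] at this
            tauto
        refine ⟨u, w', insert y s, ⟨y, Finset.mem_insert_self _ _⟩, hsupp, ?_, ?_⟩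
        · rw [hlen', Finset.card_insert_of_notMem hy]
          omega
        · rw [Finset.card_insert_of_notMem hy]
          have h2 : min (c + 1 + 1) (Fintype.card V') ≤ min (c + 1) (Fintype.card V') + 1 := by
            rcases le_total (c + 1 + 1) (Fintype.card V') with h | h
            · rw [min_eq_left h]
              have : min (c+1) (Fintype.card V') = c + 1 := min_eq_left (by omega)
              omega
            · rw [min_eq_right h]
              rcases le_total (c+1) (Fintype.card V') with h' | h'
              · rw [min_eq_left h']; omega
              · rw [min_eq_right h']; omega
          omega
  obtain ⟨u, w, s, _, hcov, hlen, hmin⟩ := key (Fintype.card V')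
  have hs : s = Finset.univ := by
    apply Finset.eq_univ_of_card
    have : min (Fintype.card V' + 1) (Fintype.card V') = Fintype.card V' := min_eq_right (by omega)
    have h2 := Finset.card_le_card (Finset.subset_univ s)
    rw [Finset.card_univ] at h2
    omega
  refine ⟨u, w, fun v => hcov v (hs ▸ Finset.mem_univ v), le_trans hlen ?_⟩
  have := Finset.card_le_card (Finset.subset_univ s)
  rw [Finset.card_univ] at this
  omega

def wtf (n : ℕ) (x : Fin n → Bool) : ℕ := (Finset.univ.filter fun i => x i = true).card

lemma card_wt_le (n w : ℕ) :
    ((Finset.univ : Finset (Fin n → Bool)).filter fun x => wtf n x = w).card ≤ Nat.choose n w := by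
  have h := Finset.card_le_card_of_injOn
    (f := fun x : Fin n → Bool => Finset.univ.filter fun i => x i = true)
    (s := (Finset.univ : Finset (Fin n → Bool)).filter fun x => wtf n x = w)
    (t := Finset.powersetCard w (Finset.univ : Finset (Fin n)))
    (by
      intro x hx
      rw [Finset.mem_coe, Finset.mem_filter] at hx
      rw [Finset.mem_coe, Finset.mem_powersetCard]
      exact ⟨Finset.subset_univ _, hx.2⟩)
    (by
      intro x _ y _ hxy
      funext i
      have hxy' : (Finset.univ.filter fun j => x j = true) =
          (Finset.univ.filter fun j => y j = true) := hxy
      have hmem : (i ∈ Finset.univ.filter fun j => x j = true) ↔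
          (i ∈ Finset.univ.filter fun j => y j = true) := by rw [hxy']
      simp only [Finset.mem_filter, Finset.mem_univ, true_and] at hmem
      cases hix : x i <;> cases hiy : y i <;> simp_all)
  rwa [Finset.card_powersetCard, Finset.card_univ, Fintype.card_fin] at h

lemma wt_step (n : ℕ) (x y : Fin n → Bool) (i0 : Fin n) (hx : x i0 = true) (hy : y i0 = false)
    (hagree : ∀ i, i ≠ i0 → x i = y i) : wtf n x = wtf n y + 1 := by
  have hA : (Finset.univ.filter fun i => x i = true) =
      insert i0 (Finset.univ.filter fun i => y i = true) := by
    ext i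
    simp only [Finset.mem_filter, Finset.mem_univ, true_and, Finset.mem_insert]
    constructor
    · intro hxi
      by_cases hi : i = i0
      · exact Or.inl hi
      · exact Or.inr (by rw [← hagree i hi]; exact hxi)
    · rintro (rfl | hyi)
      · exact hx
      · by_cases hi : i = i0
        · subst hi; rw [hyi] at hy; exact absurd hy (by simp)
        · rw [hagree i hi]; exact hyi
  have hni : i0 ∉ (Finset.univ.filter fun i => y i = true) := by
    simp [hy]
  rw [wtf, wtf, hA, Finset.card_insert_of_notMem hni]

lemma adj_wt (n : ℕ) (x y : Fin n → Bool)
    (h : (Finset.univ.filter fun i => x i ≠ y i).card = 1) :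
    wtf n y = wtf n x + 1 ∨ wtf n x = wtf n y + 1 := by
  obtain ⟨i0, hi0⟩ := Finset.card_eq_one.1 h
  have hmem : x i0 ≠ y i0 := by
    have : i0 ∈ Finset.univ.filter fun i => x i ≠ y i := by rw [hi0]; exact Finset.mem_singleton_self i0
    simpa using this
  have hagree : ∀ i, i ≠ i0 → x i = y i := by
    intro i hi
    by_contra hne
    have : i ∈ Finset.univ.filter fun j => x j ≠ y j := by simpa using hne
    rw [hi0, Finset.mem_singleton] at this
    exact hi this
  cases hxv : x i0 with
  | true =>
    have hyv : y i0 = false := by cases hyv : y i0 <;> simp_all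
    exact Or.inr (wt_step n x y i0 hxv hyv hagree)
  | false =>
    have hyv : y i0 = true := by cases hyv : y i0 <;> simp_all
    exact Or.inl (wt_step n y x i0 hyv hxv (fun i hi => (hagree i hi).symm))

namespace Stmt14Aux

variable (t r len : ℕ) (lastB : ℕ → Bool)

def size (j : ℕ) : ℕ :=
  (if 1 ≤ j then t else 0) + (if lastB j then r else 0) + (if j < len then t else 0)

def bnd (j : ℕ) : ℕ := ∑ j' ∈ Finset.range j, size t r len lastB j'

lemma bnd_succ (j : ℕ) : bnd t r len lastB (j+1) = bnd t r len lastB j + size t r len lastB j := by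
  rw [bnd, bnd, Finset.sum_range_succ]

lemma bnd_mono : Monotone (bnd t r len lastB) := by
  intro a b hab
  exact Finset.sum_le_sum_of_subset (Finset.range_subset_range.2 hab)

def runOf (p : ℕ) : ℕ := Nat.findGreatest (fun j => bnd t r len lastB j ≤ p) len

lemma runOf_le (p : ℕ) : runOf t r len lastB p ≤ len := Nat.findGreatest_le len

lemma bnd_zero_le (p : ℕ) : bnd t r len lastB 0 ≤ p := by
  rw [bnd]; simp

lemma runOf_spec {p : ℕ} (hp : p < bnd t r len lastB (len+1)) :
    bnd t r len lastB (runOf t r len lastB p) ≤ p ∧ p < bnd t r len lastB (runOf t r len lastB p + 1) := by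
  constructor
  · exact Nat.findGreatest_spec (P := fun j => bnd t r len lastB j ≤ p)
      (Nat.zero_le len) (bnd_zero_le t r len lastB p)
  · rcases Nat.lt_or_ge (runOf t r len lastB p) len with h | h
    · by_contra hcon
      push_neg at hcon
      exact (Nat.findGreatest_is_greatest (P := fun j => bnd t r len lastB j ≤ p)
        (k := runOf t r len lastB p + 1) (n := len)
        (Nat.lt_succ_self _) (by omega)) hcon
    · have heq : runOf t r len lastB p = len := le_antisymm (runOf_le _ _ _ _ _) h
      rw [heq]; exact hp

lemma runOf_mono {p q : ℕ} (hpq : p ≤ q) : runOf t r len lastB p ≤ runOf t r len lastB q := by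
  have h1 : bnd t r len lastB (runOf t r len lastB p) ≤ p :=
    Nat.findGreatest_spec (P := fun j => bnd t r len lastB j ≤ p)
      (Nat.zero_le len) (bnd_zero_le t r len lastB p)
  exact Nat.le_findGreatest (P := fun j => bnd t r len lastB j ≤ q)
    (runOf_le t r len lastB p) (le_trans h1 hpq)


lemma size_ge_B {j : ℕ} (hj : 1 ≤ j) : t ≤ size t r len lastB j := by
  rw [size]; simp only [hj, if_pos]; omega

lemma size_ge_2t {j : ℕ} (hj1 : 1 ≤ j) (hj2 : j < len) : 2*t ≤ size t r len lastB j := by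
  rw [size]; simp only [hj1, hj2, if_pos]; omega

def isConn (p : ℕ) : Prop :=
  (1 ≤ runOf t r len lastB p ∧ p < bnd t r len lastB (runOf t r len lastB p) + t) ∨
  (runOf t r len lastB p < len ∧ bnd t r len lastB (runOf t r len lastB p + 1) - t ≤ p)

instance : DecidablePred (isConn t r len lastB) := fun p => by
  unfold isConn; infer_instance

lemma connCount :
    ((Finset.range (bnd t r len lastB (len+1))).filter (isConn t r len lastB)).card
      ≤ 2*t*(len+1) := by
  have hsub : (Finset.range (bnd t r len lastB (len+1))).filter (isConn t r len lastB) ⊆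
      (Finset.range (len+1)).biUnion (fun j =>
        (Finset.Ico (bnd t r len lastB j) (bnd t r len lastB j + t)) ∪
        (Finset.Ico (bnd t r len lastB (j+1) - t) (bnd t r len lastB (j+1)))) := by
    intro p hp
    rw [Finset.mem_filter, Finset.mem_range] at hp
    obtain ⟨hp1, hp2⟩ := hp
    have hspec := runOf_spec t r len lastB hp1
    refine Finset.mem_biUnion.2 ⟨runOf t r len lastB p,
      Finset.mem_range.2 (by have := runOf_le t r len lastB p; omega), ?_⟩
    rcases hp2 with ⟨_, h2⟩ | ⟨_, h2⟩
    · exact Finset.mem_union_left _ (Finset.mem_Ico.2 ⟨hspec.1, h2⟩)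
    · exact Finset.mem_union_right _ (Finset.mem_Ico.2 ⟨h2, hspec.2⟩)
  calc ((Finset.range (bnd t r len lastB (len+1))).filter (isConn t r len lastB)).card
      ≤ _ := Finset.card_le_card hsub
    _ ≤ ∑ j ∈ Finset.range (len+1),
        ((Finset.Ico (bnd t r len lastB j) (bnd t r len lastB j + t)) ∪
         (Finset.Ico (bnd t r len lastB (j+1) - t) (bnd t r len lastB (j+1)))).card :=
        Finset.card_biUnion_le
    _ ≤ ∑ _j ∈ Finset.range (len+1), (2*t) := by
        refine Finset.sum_le_sum ?_
        intro j _
        refine le_trans (Finset.card_union_le _ _) ?_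
        rw [Nat.card_Ico, Nat.card_Ico]
        omega
    _ = 2*t*(len+1) := by rw [Finset.sum_const, Finset.card_range, smul_eq_mul]; ring

lemma le_bnd_last :
    ((Finset.range (len+1)).filter (fun j => lastB j = true)).card * r
      ≤ bnd t r len lastB (len+1) := by
  rw [bnd]
  calc ((Finset.range (len+1)).filter (fun j => lastB j = true)).card * r
      = ∑ _j ∈ (Finset.range (len+1)).filter (fun j => lastB j = true), r := by
        rw [Finset.sum_const, smul_eq_mul]
    _ ≤ ∑ j ∈ (Finset.range (len+1)).filter (fun j => lastB j = true), size t r len lastB j := by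
        refine Finset.sum_le_sum ?_
        intro j hj
        rw [Finset.mem_filter] at hj
        rw [size]; simp only [hj.2, if_pos]; omega
    _ ≤ _ := Finset.sum_le_sum_of_subset (Finset.filter_subset _ _)

lemma dump_spec {p : ℕ} (hp : p < bnd t r len lastB (len+1)) (hc : ¬ isConn t r len lastB p) :
    lastB (runOf t r len lastB p) = true ∧
    bnd t r len lastB (runOf t r len lastB p)
      + (if 1 ≤ runOf t r len lastB p then t else 0) ≤ p ∧
    p < bnd t r len lastB (runOf t r len lastB p)
      + (if 1 ≤ runOf t r len lastB p then t else 0) + r := by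
  obtain ⟨hs1, hs2⟩ := runOf_spec t r len lastB hp
  rw [isConn] at hc
  push_neg at hc
  obtain ⟨hc1, hc2⟩ := hc
  have hbs := bnd_succ t r len lastB (runOf t r len lastB p)
  rw [size] at hbs
  by_cases h1 : 1 ≤ runOf t r len lastB p <;> by_cases h2 : runOf t r len lastB p < len <;>
    by_cases h3 : lastB (runOf t r len lastB p) = true
  · rw [if_pos h1, if_pos h2, if_pos h3] at hbs
    rw [if_pos h1]
    have hA := hc1 h1
    have hB := hc2 h2
    exact ⟨h3, by omega, by omega⟩
  · rw [if_pos h1, if_pos h2, if_neg h3] at hbs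
    have hA := hc1 h1
    have hB := hc2 h2
    exact absurd rfl (by omega : ¬ (0:ℕ) = 0)
  · rw [if_pos h1, if_neg h2, if_pos h3] at hbs
    rw [if_pos h1]
    have hA := hc1 h1
    exact ⟨h3, by omega, by omega⟩
  · rw [if_pos h1, if_neg h2, if_neg h3] at hbs
    have hA := hc1 h1
    exact absurd rfl (by omega : ¬ (0:ℕ) = 0)
  · rw [if_neg h1, if_pos h2, if_pos h3] at hbs
    rw [if_neg h1]
    have hB := hc2 h2
    exact ⟨h3, by omega, by omega⟩
  · rw [if_neg h1, if_pos h2, if_neg h3] at hbs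
    have hB := hc2 h2
    exact absurd rfl (by omega : ¬ (0:ℕ) = 0)
  · rw [if_neg h1, if_neg h2, if_pos h3] at hbs
    rw [if_neg h1]
    exact ⟨h3, by omega, by omega⟩
  · rw [if_neg h1, if_neg h2, if_neg h3] at hbs
    exact absurd rfl (by omega : ¬ (0:ℕ) = 0)

lemma cross_spec {p q : ℕ} (ht1 : 1 ≤ t) (hpq : p < q) (hq : q < bnd t r len lastB (len+1))
    (hgap : q < p + t) (hne : runOf t r len lastB p ≠ runOf t r len lastB q) :
    runOf t r len lastB q = runOf t r len lastB p + 1 ∧ runOf t r len lastB p < len ∧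
    (¬ (1 ≤ runOf t r len lastB p ∧
        p < bnd t r len lastB (runOf t r len lastB p) + t)) ∧
    (bnd t r len lastB (runOf t r len lastB p + 1) - t ≤ p) ∧
    (1 ≤ runOf t r len lastB q ∧ q < bnd t r len lastB (runOf t r len lastB q) + t) := by
  have hp : p < bnd t r len lastB (len+1) := lt_trans hpq hq
  obtain ⟨hps1, hps2⟩ := runOf_spec t r len lastB hp
  obtain ⟨hqs1, hqs2⟩ := runOf_spec t r len lastB hq
  have hmono : runOf t r len lastB p < runOf t r len lastB q :=
    lt_of_le_of_ne (runOf_mono t r len lastB (le_of_lt hpq)) hne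
  have hble : bnd t r len lastB (runOf t r len lastB p + 1) ≤ bnd t r len lastB (runOf t r len lastB q) :=
    bnd_mono t r len lastB hmono
  have heq : runOf t r len lastB q = runOf t r len lastB p + 1 := by
    by_contra hcon
    have h2 : runOf t r len lastB p + 2 ≤ runOf t r len lastB q := by omega
    have h3 : bnd t r len lastB (runOf t r len lastB p + 2) ≤
        bnd t r len lastB (runOf t r len lastB q) := bnd_mono t r len lastB h2
    have h4 : bnd t r len lastB (runOf t r len lastB p + 2)
        = bnd t r len lastB (runOf t r len lastB p + 1)
          + size t r len lastB (runOf t r len lastB p + 1) :=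
      bnd_succ t r len lastB (runOf t r len lastB p + 1)
    have h5 := size_ge_B t r len lastB (j := runOf t r len lastB p + 1) (by omega)
    omega
  have hplen : runOf t r len lastB p < len := by
    have := runOf_le t r len lastB q
    omega
  refine ⟨heq, hplen, ?_, ?_, ?_⟩
  · rintro ⟨h1, h2⟩
    have h3 := size_ge_2t t r len lastB h1 hplen
    have h4 := bnd_succ t r len lastB (runOf t r len lastB p)
    rw [heq] at hqs1
    omega
  · rw [heq] at hqs1
    omega
  · rw [heq] at hqs1 ⊢
    constructor
    · omega
    · omega

end Stmt14Aux

open Stmt14Aux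

/-- Embedding a subgraph `Q` of `Q_n` into an `(m,s)`-snake
`{M_1,…,M_k}`, avoiding a forbidden set `D_x` of size at most `Δ` for each
vertex `x`, provided `m ≥ v(Q)/k + s + Δ` and `s ≥ 2Δ + 8k·C(n,⌊n/2⌋)`. -/
theorem stmt14 {V : Type*} [Fintype V] [DecidableEq V] (G : SimpleGraph V)
    (n k m s Δ : ℕ) (hk : 0 < k) (M : Fin k → Finset V)
    (hdisj : ∀ i j, i ≠ j → Disjoint (M i) (M j))
    (hcard : ∀ i, (M i).card = m)
    (hclique : ∀ i, G.IsClique (M i : Set V))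
    (hconn : (SimpleGraph.fromRel fun i j : Fin k => hasKss G s (M i) (M j)).Connected)
    (sQ : Finset (Fin n → Bool)) (Q : SimpleGraph (Fin n → Bool))
    (hQ : Q ≤ cubeGraph n) (hQs : ∀ x y, Q.Adj x y → x ∈ sQ ∧ y ∈ sQ)
    (D : (Fin n → Bool) → Finset V)
    (hD : ∀ x, D x ⊆ Finset.univ.biUnion fun i => M i)
    (hDcard : ∀ x, (D x).card ≤ Δ)
    (hm : (sQ.card : ℝ) / k + s + Δ ≤ m)
    (hs : 2 * Δ + 8 * k * Nat.choose n (n / 2) ≤ s) :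
    ∃ φ : (Fin n → Bool) → V,
      (∀ x ∈ sQ, ∀ y ∈ sQ, φ x = φ y → x = y) ∧
      (∀ x ∈ sQ, φ x ∈ Finset.univ.biUnion fun i => M i) ∧
      (∀ x ∈ sQ, φ x ∉ D x) ∧
      (∀ x y, Q.Adj x y → G.Adj (φ x) (φ y)) := by
  classical
  set C := Nat.choose n (n / 2) with hCdef
  have hC1 : 1 ≤ C := Nat.choose_pos (Nat.div_le_self n 2)
  set N := sQ.card with hNdef
  set t := 2 * C with htdef
  set r := (N + (k - 1)) / k with hrdef
  -- arithmetic consequences of hm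
  have hk0 : (0:ℝ) < (k:ℝ) := by exact_mod_cast hk
  have hmn : N + k * (s + Δ) ≤ k * m := by
    have h2 : (k:ℝ) * ((N:ℝ)/k + s + Δ) ≤ (k:ℝ) * m :=
      mul_le_mul_of_nonneg_left hm (le_of_lt hk0)
    have h3 : (k:ℝ) * ((N:ℝ)/k + s + Δ) = (N:ℝ) + k*(s+Δ) := by field_simp; ring
    have h4 : (N:ℝ) + (k:ℝ)*((s:ℝ)+(Δ:ℝ)) ≤ (k:ℝ)*(m:ℝ) := by linarith
    exact_mod_cast h4
  have hsd : s + Δ ≤ m :=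
    Nat.le_of_mul_le_mul_left (le_trans (Nat.le_add_left _ _) hmn) hk
  have hNle : N ≤ k * (m - (s+Δ)) := by
    have e : k*(m-(s+Δ)) + k*(s+Δ) = k*m := by
      rw [← Nat.mul_add]
      congr 1
      omega
    omega
  have hrle : r ≤ m - (s+Δ) := by
    rw [hrdef]
    have h5 : N + (k-1) < ((m - (s+Δ)) + 1) * k := by
      have e2 : ((m-(s+Δ))+1)*k = k*(m-(s+Δ)) + k := by ring
      omega
    have := (Nat.div_lt_iff_lt_mul hk).2 h5
    omega
  have hrm : r + s + Δ ≤ m := by omega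
  have hkr : N ≤ k * r := by
    have hdm := Nat.div_add_mod (N + (k-1)) k
    have hmod : (N+(k-1)) % k < k := Nat.mod_lt _ hk
    rw [hrdef]
    omega
  -- the walk
  obtain ⟨u, wlk, hcov, hlen2⟩ := exists_covering_walk hconn
  set len := wlk.length with hlendef
  have hlenk : len + 2 ≤ 2 * k := by
    rw [Fintype.card_fin] at hlen2
    exact hlen2
  set W : ℕ → Fin k := fun j => wlk.getVert j with hWdef
  have hWadj : ∀ j, j < len →
      (SimpleGraph.fromRel fun i j : Fin k => hasKss G s (M i) (M j)).Adj (W j) (W (j+1)) :=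
    fun j hj => wlk.adj_getVert_succ hj
  have hWsur : ∀ i : Fin k, ∃ j, j ≤ len ∧ W j = i := by
    intro i
    have h := (SimpleGraph.Walk.mem_support_iff_exists_getVert).1 (hcov i)
    obtain ⟨j, hj1, hj2⟩ := h
    exact ⟨j, hj2, hj1⟩
  -- last visits
  set lastIdx : Fin k → ℕ := fun i => Nat.findGreatest (fun j => W j = i) len with hLIdef
  have hLIW : ∀ i, W (lastIdx i) = i := by
    intro i
    obtain ⟨j, hj1, hj2⟩ := hWsur i
    exact Nat.findGreatest_spec (P := fun j => W j = i) hj1 hj2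
  have hLIle : ∀ i, lastIdx i ≤ len := fun i => Nat.findGreatest_le len
  have hLImax : ∀ i j, j ≤ len → W j = i → j ≤ lastIdx i :=
    fun i j h1 h2 => Nat.le_findGreatest (P := fun j => W j = i) h1 h2
  set lastB : ℕ → Bool := fun j => decide (lastIdx (W j) = j) with hLBdef
  have hlastiff : ∀ j, lastB j = true ↔ lastIdx (W j) = j := by
    intro j
    rw [hLBdef]
    simp
  have hlastcard : ((Finset.range (len+1)).filter (fun j => lastB j = true)).card = k := by
    have himg : (Finset.range (len+1)).filter (fun j => lastB j = true)
        = Finset.univ.image lastIdx := by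
      ext j
      rw [Finset.mem_filter, Finset.mem_range, Finset.mem_image, hlastiff]
      constructor
      · rintro ⟨_, h2⟩
        exact ⟨W j, Finset.mem_univ _, h2⟩
      · rintro ⟨i, _, hij⟩
        subst hij
        refine ⟨by have := hLIle i; omega, ?_⟩
        rw [hLIW i]
    rw [himg]
    rw [Finset.card_image_of_injective _ ?_, Finset.card_univ, Fintype.card_fin]
    intro i1 i2 h
    rw [← hLIW i1, ← hLIW i2, h]
  -- connectors
  have hedge : ∀ j, ∃ X Y : Finset V, X ⊆ M (W j) ∧ Y ⊆ M (W (j+1)) ∧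
      (j < len → X.card = s ∧ Y.card = s ∧ ∀ a ∈ X, ∀ b ∈ Y, G.Adj a b) := by
    intro j
    by_cases hj : j < len
    · have hadj := hWadj j hj
      rw [SimpleGraph.fromRel_adj] at hadj
      obtain ⟨-, hcase⟩ := hadj
      rcases hcase with h | h
      · obtain ⟨X, Y, h1, h2, h3, h4, h5⟩ := h
        exact ⟨X, Y, h1, h2, fun _ => ⟨h3, h4, h5⟩⟩
      · obtain ⟨X, Y, h1, h2, h3, h4, h5⟩ := h
        exact ⟨Y, X, h2, h1, fun _ => ⟨h4, h3, fun a ha b hb => (h5 b hb a ha).symm⟩⟩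
    · exact ⟨∅, ∅, Finset.empty_subset _, Finset.empty_subset _, fun h => absurd h hj⟩
  choose Xe Ye hXsub hYsub hXY using hedge
  -- position function
  set enc : (Fin n → Bool) → ℕ := fun x => ((Fintype.equivFin (Fin n → Bool)) x : ℕ)
    with hencdef
  have hencinj : Function.Injective enc := by
    intro a b h
    exact (Fintype.equivFin (Fin n → Bool)).injective (Fin.val_injective h)
  set pos : (Fin n → Bool) → ℕ := fun x =>
    (sQ.filter fun y => wtf n y < wtf n x).card
    + (sQ.filter fun y => wtf n y = wtf n x ∧ enc y < enc x).card with hposdef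
  have hpos_eq : ∀ x, pos x = (sQ.filter fun y => wtf n y < wtf n x).card
      + (sQ.filter fun y => wtf n y = wtf n x ∧ enc y < enc x).card := fun x => rfl
  have hLB2 : ∀ w : ℕ,
      (sQ.filter fun y => wtf n y < w).card + (sQ.filter fun y => wtf n y = w).card
      = (sQ.filter fun y => wtf n y < w + 1).card := by
    intro w
    rw [← Finset.card_union_of_disjoint (by
      rw [Finset.disjoint_left]
      intro z hz1 hz2
      rw [Finset.mem_filter] at hz1 hz2
      omega)]
    congr 1
    ext z
    simp only [Finset.mem_union, Finset.mem_filter]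
    constructor
    · rintro (⟨hz, h⟩ | ⟨hz, h⟩) <;> exact ⟨hz, by omega⟩
    · rintro ⟨hz, h⟩
      rcases Nat.lt_or_ge (wtf n z) w with h2 | h2
      · exact Or.inl ⟨hz, h2⟩
      · exact Or.inr ⟨hz, by omega⟩
  have hBle : ∀ w, (sQ.filter fun y => wtf n y = w).card ≤ C := by
    intro w
    calc (sQ.filter fun y => wtf n y = w).card
        ≤ ((Finset.univ : Finset (Fin n → Bool)).filter fun y => wtf n y = w).card :=
          Finset.card_le_card (Finset.filter_subset_filter _ (Finset.subset_univ _))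
      _ ≤ Nat.choose n w := card_wt_le n w
      _ ≤ C := Nat.choose_le_middle w n
  have hposub : ∀ x ∈ sQ, pos x < (sQ.filter fun y => wtf n y < wtf n x + 1).card := by
    intro x hx
    rw [← hLB2 (wtf n x), hpos_eq]
    have hstrict : (sQ.filter fun y => wtf n y = wtf n x ∧ enc y < enc x).card
        < (sQ.filter fun y => wtf n y = wtf n x).card := by
      apply Finset.card_lt_card
      rw [Finset.ssubset_iff_of_subset (Finset.monotone_filter_right _ (fun z _ hz => hz.1))]
      exact ⟨x, Finset.mem_filter.2 ⟨hx, rfl⟩, fun hmem => by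
        rw [Finset.mem_filter] at hmem
        exact lt_irrefl _ hmem.2.2⟩
    omega
  have hposN : ∀ x ∈ sQ, pos x < N :=
    fun x hx => lt_of_lt_of_le (hposub x hx) (Finset.card_filter_le _ _)
  have hposmono : ∀ x ∈ sQ, ∀ y ∈ sQ, wtf n x < wtf n y → pos x < pos y := by
    intro x hx y hy hw
    calc pos x < (sQ.filter fun z => wtf n z < wtf n x + 1).card := hposub x hx
      _ ≤ (sQ.filter fun z => wtf n z < wtf n y).card :=
          Finset.card_le_card (Finset.monotone_filter_right _ (fun z hz => by omega))
      _ ≤ pos y := by rw [hpos_eq]; exact Nat.le_add_right _ _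
  have hposcross : ∀ x ∈ sQ, ∀ y ∈ sQ, wtf n y = wtf n x + 1 →
      pos x < pos y ∧ pos y < pos x + t := by
    intro x hx y hy hw
    refine ⟨hposmono x hx y hy (by omega), ?_⟩
    have h1 : pos y < (sQ.filter fun z => wtf n z < wtf n y + 1).card := hposub y hy
    have h2 : (sQ.filter fun z => wtf n z < wtf n y).card
        = (sQ.filter fun z => wtf n z < wtf n x).card
          + (sQ.filter fun z => wtf n z = wtf n x).card := by
      rw [hLB2 (wtf n x), hw]
    have h3 := hBle (wtf n x)
    have h4 := hBle (wtf n y)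
    have h5 : (sQ.filter fun z => wtf n z < wtf n y).card ≤ pos x
        + (sQ.filter fun z => wtf n z = wtf n x).card := by
      rw [hpos_eq]
      omega
    have h6 := hLB2 (wtf n y)
    rw [htdef]
    omega
  have hposinj : ∀ x ∈ sQ, ∀ y ∈ sQ, pos x = pos y → x = y := by
    intro x hx y hy h
    by_contra hne
    have key : ∀ a ∈ sQ, ∀ b ∈ sQ, wtf n a = wtf n b → enc a < enc b → pos a < pos b := by
      intro a ha b hb hab he
      rw [hpos_eq, hpos_eq]
      have e1 : (sQ.filter fun z => wtf n z < wtf n a).card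
          = (sQ.filter fun z => wtf n z < wtf n b).card := by rw [hab]
      have e2 : (sQ.filter fun z => wtf n z = wtf n a ∧ enc z < enc a).card
          < (sQ.filter fun z => wtf n z = wtf n b ∧ enc z < enc b).card := by
        apply Finset.card_lt_card
        rw [Finset.ssubset_iff_of_subset (Finset.monotone_filter_right _
          (fun z _ hz => ⟨by rw [hz.1, hab], lt_trans hz.2 he⟩))]
        refine ⟨a, Finset.mem_filter.2 ⟨ha, hab, he⟩, fun hmem => ?_⟩
        rw [Finset.mem_filter] at hmem
        exact lt_irrefl _ hmem.2.2
      omega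
    rcases Nat.lt_trichotomy (wtf n x) (wtf n y) with hw | hw | hw
    · exact absurd h (Nat.ne_of_lt (hposmono x hx y hy hw))
    · rcases Nat.lt_trichotomy (enc x) (enc y) with he | he | he
      · exact absurd h (Nat.ne_of_lt (key x hx y hy hw he))
      · exact hne (hencinj he)
      · exact absurd h.symm (Nat.ne_of_lt (key y hy x hx hw.symm he))
    · exact absurd h.symm (Nat.ne_of_lt (hposmono y hy x hx hw))
  -- nonempty V
  have h8 : 8 ≤ 8*k*C := by
    calc 8 = 8*1*1 := by ring
      _ ≤ 8*k*C := Nat.mul_le_mul (Nat.mul_le_mul_left 8 hk) hC1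
  have hspos : 0 < s := by omega
  have hmpos : 0 < m := by omega
  obtain ⟨v0, hv0⟩ : ((M ⟨0, hk⟩)).Nonempty := Finset.card_pos.1 (by rw [hcard]; exact hmpos)
  -- schedule facts
  have hNB : N ≤ bnd t r len lastB (len+1) := by
    calc N ≤ k*r := hkr
      _ = ((Finset.range (len+1)).filter (fun j => lastB j = true)).card * r := by
          rw [hlastcard]
      _ ≤ _ := le_bnd_last t r len lastB
  have harith : 2*t*(len+1) + 4*C ≤ 8*k*C := by
    calc 2*t*(len+1) + 4*C = 4*C*(len+2) := by rw [htdef]; ring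
      _ ≤ 4*C*(2*k) := Nat.mul_le_mul_left _ hlenk
      _ = 8*k*C := by ring
  -- pool
  set pool : ℕ → Finset V := fun p =>
    if 1 ≤ runOf t r len lastB p ∧ p < bnd t r len lastB (runOf t r len lastB p) + t then
      Ye (runOf t r len lastB p - 1)
    else if runOf t r len lastB p < len ∧ bnd t r len lastB (runOf t r len lastB p + 1) - t ≤ p
      then Xe (runOf t r len lastB p)
    else M (W (runOf t r len lastB p)) with hpooldef
  have hpool_eq : ∀ p, pool p =
      (if 1 ≤ runOf t r len lastB p ∧ p < bnd t r len lastB (runOf t r len lastB p) + t then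
        Ye (runOf t r len lastB p - 1)
      else if runOf t r len lastB p < len ∧ bnd t r len lastB (runOf t r len lastB p + 1) - t ≤ p
        then Xe (runOf t r len lastB p)
      else M (W (runOf t r len lastB p))) := fun p => rfl
  have hpool_sub : ∀ p, pool p ⊆ M (W (runOf t r len lastB p)) := by
    intro p
    rw [hpool_eq]
    split_ifs with h1 h2
    · have hsub := hYsub (runOf t r len lastB p - 1)
      rw [show runOf t r len lastB p - 1 + 1 = runOf t r len lastB p from by omega] at hsub
      exact hsub
    · exact hXsub _
    · exact Finset.Subset.refl _
  have hpool_card_conn : ∀ p, isConn t r len lastB p → (pool p).card = s := by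
    intro p hc
    rw [hpool_eq]
    split_ifs with h1 h2
    · refine (hXY (runOf t r len lastB p - 1) ?_).2.1
      have := runOf_le t r len lastB p
      omega
    · exact (hXY _ h2.1).1
    · rw [isConn] at hc
      exact absurd hc (not_or.2 ⟨h1, h2⟩)
  have hpool_dump : ∀ p, ¬ isConn t r len lastB p → pool p = M (W (runOf t r len lastB p)) := by
    intro p hc
    rw [isConn] at hc
    rw [hpool_eq, if_neg (fun h => hc (Or.inl h)), if_neg (fun h => hc (Or.inr h))]
  -- priority
  set pri : (Fin n → Bool) → ℕ := fun x =>
    if isConn t r len lastB (pos x) then pos x else bnd t r len lastB (len+1) + pos x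
    with hpridef
  have hpri_eq : ∀ x, pri x =
      if isConn t r len lastB (pos x) then pos x else bnd t r len lastB (len+1) + pos x :=
    fun x => rfl
  -- counting
  have hconnAll : (sQ.filter fun b => isConn t r len lastB (pos b)).card ≤ 2*t*(len+1) := by
    refine le_trans (Finset.card_le_card_of_injOn pos ?_ ?_) (connCount t r len lastB)
    · intro b hb
      rw [Finset.mem_coe, Finset.mem_filter] at hb
      rw [Finset.mem_coe, Finset.mem_filter, Finset.mem_range]
      exact ⟨lt_of_lt_of_le (hposN b hb.1) hNB, hb.2⟩
    · intro a ha b hb hab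
      rw [Finset.mem_coe, Finset.mem_filter] at ha hb
      exact hposinj a ha.1 b hb.1 hab
  have hdumpC : ∀ a ∈ sQ, ¬ isConn t r len lastB (pos a) →
      (sQ.filter fun b => ¬ isConn t r len lastB (pos b) ∧
        W (runOf t r len lastB (pos b)) = W (runOf t r len lastB (pos a))).card ≤ r := by
    intro a ha hda
    have hpa : pos a < bnd t r len lastB (len+1) := lt_of_lt_of_le (hposN a ha) hNB
    obtain ⟨hlast_a, hint_a1, hint_a2⟩ := dump_spec t r len lastB hpa hda
    have hcard' : (Finset.Ico
        (bnd t r len lastB (runOf t r len lastB (pos a))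
          + (if 1 ≤ runOf t r len lastB (pos a) then t else 0))
        (bnd t r len lastB (runOf t r len lastB (pos a))
          + (if 1 ≤ runOf t r len lastB (pos a) then t else 0) + r)).card = r := by
      rw [Nat.card_Ico]
      omega
    refine le_trans (Finset.card_le_card_of_injOn pos ?_ ?_) (le_of_eq hcard')
    · intro b hb
      rw [Finset.mem_coe, Finset.mem_filter] at hb
      obtain ⟨hbQ, hbdump, hbW⟩ := hb
      have hpb : pos b < bnd t r len lastB (len+1) := lt_of_lt_of_le (hposN b hbQ) hNB
      obtain ⟨hlast_b, hint_b1, hint_b2⟩ := dump_spec t r len lastB hpb hbdump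
      have hrunb : runOf t r len lastB (pos b) = runOf t r len lastB (pos a) := by
        have e1 := (hlastiff _).1 hlast_b
        have e2 := (hlastiff _).1 hlast_a
        rw [hbW] at e1
        omega
      rw [Finset.mem_coe, Finset.mem_Ico]
      rw [hrunb] at hint_b1 hint_b2
      exact ⟨hint_b1, hint_b2⟩
    · intro a1 ha1 b1 hb1 hab
      rw [Finset.mem_coe, Finset.mem_filter] at ha1 hb1
      exact hposinj a1 ha1.1 b1 hb1.1 hab
  -- same-clique from non-disjoint pools
  have hclq : ∀ a b : Fin n → Bool, ¬ Disjoint (pool (pos a)) (pool (pos b)) →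
      W (runOf t r len lastB (pos b)) = W (runOf t r len lastB (pos a)) := by
    intro a b hnd
    by_contra hne
    exact hnd (Finset.disjoint_of_subset_left (hpool_sub (pos a))
      (Finset.disjoint_of_subset_right (hpool_sub (pos b))
        (hdisj _ _ (fun h => hne h.symm))))
  have hπinj : ∀ a ∈ sQ, ∀ b ∈ sQ, pri a = pri b → a = b := by
    intro a ha b hb h
    rw [hpri_eq, hpri_eq] at h
    have hNa := hposN a ha
    have hNb := hposN b hb
    by_cases hca : isConn t r len lastB (pos a) <;>
      by_cases hcb : isConn t r len lastB (pos b)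
    · rw [if_pos hca, if_pos hcb] at h
      exact hposinj a ha b hb h
    · rw [if_pos hca, if_neg hcb] at h
      omega
    · rw [if_neg hca, if_pos hcb] at h
      omega
    · rw [if_neg hca, if_neg hcb] at h
      exact hposinj a ha b hb (by omega)
  have hcount : ∀ a ∈ sQ,
      (sQ.filter fun b => pri b < pri a ∧ ¬ Disjoint (pool (pos a)) (pool (pos b))).card
        + (D a).card < (pool (pos a)).card := by
    intro a ha
    have hDa := hDcard a
    by_cases hca : isConn t r len lastB (pos a)
    · rw [hpool_card_conn _ hca]
      have hsubf : (sQ.filter fun b => pri b < pri a ∧ ¬Disjoint (pool (pos a)) (pool (pos b)))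
          ⊆ (sQ.filter fun b => isConn t r len lastB (pos b)).erase a := by
        intro b hb
        rw [Finset.mem_filter] at hb
        obtain ⟨hbQ, hplt, hnd⟩ := hb
        have hba : b ≠ a := by
          intro h; subst h; exact lt_irrefl _ hplt
        refine Finset.mem_erase.2 ⟨hba, Finset.mem_filter.2 ⟨hbQ, ?_⟩⟩
        by_contra hcb
        rw [hpri_eq a, hpri_eq b, if_pos hca, if_neg hcb] at hplt
        have := hposN a ha
        omega
      have hmem : a ∈ sQ.filter fun b => isConn t r len lastB (pos b) :=
        Finset.mem_filter.2 ⟨ha, hca⟩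
      have h1 := le_trans (Finset.card_le_card hsubf)
        (le_of_eq (Finset.card_erase_of_mem hmem))
      have h2 := hconnAll
      omega
    · have hPm : (pool (pos a)).card = m := by rw [hpool_dump _ hca, hcard]
      rw [hPm]
      have hsubf : (sQ.filter fun b => pri b < pri a ∧ ¬Disjoint (pool (pos a)) (pool (pos b)))
          ⊆ (sQ.filter fun b => isConn t r len lastB (pos b))
            ∪ ((sQ.filter fun b => ¬ isConn t r len lastB (pos b) ∧
                W (runOf t r len lastB (pos b)) = W (runOf t r len lastB (pos a))).erase a) := by
        intro b hb
        rw [Finset.mem_filter] at hb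
        obtain ⟨hbQ, hplt, hnd⟩ := hb
        by_cases hcb : isConn t r len lastB (pos b)
        · exact Finset.mem_union_left _ (Finset.mem_filter.2 ⟨hbQ, hcb⟩)
        · refine Finset.mem_union_right _ (Finset.mem_erase.2
            ⟨?_, Finset.mem_filter.2 ⟨hbQ, hcb, hclq a b hnd⟩⟩)
          intro h; subst h; exact lt_irrefl _ hplt
      have hmem : a ∈ (sQ.filter fun b => ¬ isConn t r len lastB (pos b) ∧
          W (runOf t r len lastB (pos b)) = W (runOf t r len lastB (pos a))) :=
        Finset.mem_filter.2 ⟨ha, hca, rfl⟩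
      have h1 := le_trans (Finset.card_le_card hsubf) (Finset.card_union_le _ _)
      have h4 := Finset.card_erase_of_mem hmem
      have h3 := hdumpC a ha hca
      have h2 := hconnAll
      omega
  obtain ⟨ψ, hψ⟩ := greedy_injection v0 sQ pri (fun x => pool (pos x)) D hπinj hcount
  refine ⟨ψ, ?_, ?_, ?_, ?_⟩
  · intro x hx y hy h
    exact (hψ x hx).2.2 y hy h
  · intro x hx
    exact Finset.mem_biUnion.2 ⟨W (runOf t r len lastB (pos x)), Finset.mem_univ _,
      hpool_sub (pos x) (hψ x hx).1⟩
  · intro x hx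
    exact (hψ x hx).2.1
  · have hadj1 : ∀ x y, x ∈ sQ → y ∈ sQ → x ≠ y → wtf n y = wtf n x + 1 →
        G.Adj (ψ x) (ψ y) := by
      intro x y hx hy hxyne hwt
      obtain ⟨h1, h2⟩ := hposcross x hx y hy hwt
      have hpyB : pos y < bnd t r len lastB (len+1) := lt_of_lt_of_le (hposN y hy) hNB
      by_cases hrun : runOf t r len lastB (pos x) = runOf t r len lastB (pos y)
      · have m1 : ψ x ∈ M (W (runOf t r len lastB (pos x))) := hpool_sub _ (hψ x hx).1
        have m2 : ψ y ∈ M (W (runOf t r len lastB (pos x))) := by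
          rw [hrun]; exact hpool_sub _ (hψ y hy).1
        have hne2 : ψ x ≠ ψ y := fun h => hxyne ((hψ x hx).2.2 y hy h)
        exact hclique _ (Finset.mem_coe.2 m1) (Finset.mem_coe.2 m2) hne2
      · obtain ⟨heq, hplen, hnot1, h2nd, hq1⟩ :=
          cross_spec t r len lastB (by omega) h1 hpyB h2 hrun
        have hpoolx : pool (pos x) = Xe (runOf t r len lastB (pos x)) := by
          rw [hpool_eq, if_neg hnot1, if_pos ⟨hplen, h2nd⟩]
        have hpooly : pool (pos y) = Ye (runOf t r len lastB (pos x)) := by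
          rw [hpool_eq, if_pos hq1, heq, Nat.add_sub_cancel]
        refine (hXY (runOf t r len lastB (pos x)) hplen).2.2 _ ?_ _ ?_
        · rw [← hpoolx]; exact (hψ x hx).1
        · rw [← hpooly]; exact (hψ y hy).1
    intro x y hQxy
    obtain ⟨hx, hy⟩ := hQs x y hQxy
    have hne2 : x ≠ y := hQxy.ne
    have hcadj : (Finset.univ.filter fun i => x i ≠ y i).card = 1 := hQ hQxy
    rcases adj_wt n x y hcadj with h | h
    · exact hadj1 x y hx hy hne2 h
    · exact (hadj1 y x hy hx hne2.symm h).symm
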